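/- Let V be a variety of monoids. Every monoid in V is equationally Noetherian (with constants) if and only if V is a variety of abelian groups of exponent dividing some fixed n, i.e., V satisfies the identities xy = yx and x^n = 1 for some n. -/

import Mathlib

/-- Terms of the monoid language with constants from `M`. -/
inductive MTerm (M : Type) (n : ℕ) where
  | var : Fin n → MTerm M n
  | const : M → MTerm M n
  | one : MTerm M n
  | mul : MTerm M n → MTerm M n → MTerm M n

def MTerm.eval {M : Type} [Monoid M] {n : ℕ} (v : Fin n → M) : MTerm M n → M
  | .var i => v i
  | .const m => m
  | .one => 1
  | .mul t s => t.eval v * s.eval v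

def SolSet {M : Type} [Monoid M] {n : ℕ} (S : Set (MTerm M n × MTerm M n)) :
    Set (Fin n → M) :=
  {v | ∀ e ∈ S, e.1.eval v = e.2.eval v}

/-- A monoid is equationally Noetherian if every system of monoid equations with
constants, in finitely many variables, is equivalent to a finite subsystem. -/
def EquationallyNoetherian (M : Type) [Monoid M] : Prop :=
  ∀ (n : ℕ) (S : Set (MTerm M n × MTerm M n)),
    ∃ S' ⊆ S, S'.Finite ∧ SolSet S' = SolSet S

lemma SolSet_antitone {M : Type} [Monoid M] {k : ℕ} {S' S : Set (MTerm M k × MTerm M k)}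
    (h : S' ⊆ S) : SolSet S ⊆ SolSet S' :=
  fun _ hv e he => hv e (h he)

lemma not_EN_of_seq {M : Type} [Monoid M] (E : ℕ → MTerm M 1 × MTerm M 1)
    (hinj : Function.Injective E) (w : ℕ → Fin 1 → M)
    (hw : ∀ i j : ℕ, ((E j).1.eval (w i) = (E j).2.eval (w i)) ↔ j ≠ i) :
    ¬ EquationallyNoetherian M := by
  intro hEN
  obtain ⟨S', hsub, hfin, hsol⟩ := hEN 1 (Set.range E)
  have hIfin : (E ⁻¹' S').Finite := hfin.preimage hinj.injOn
  obtain ⟨i₀, hi₀⟩ := hIfin.infinite_compl.nonempty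
  have hw0 : w i₀ ∈ SolSet S' := by
    intro e he
    obtain ⟨j, rfl⟩ := hsub he
    exact (hw i₀ j).mpr (fun h => hi₀ (h ▸ he))
  rw [hsol] at hw0
  exact ((hw i₀ i₀).mp (hw0 (E i₀) ⟨i₀, rfl⟩)) rfl

inductive SL | one | e
deriving DecidableEq

instance : Monoid SL where
  mul a b := match a, b with
    | .one, b => b
    | .e, _ => .e
  one := SL.one
  one_mul a := rfl
  mul_one a := by cases a <;> rfl
  mul_assoc a b c := by cases a <;> rfl

lemma SLpow_not_EN : ¬ EquationallyNoetherian (∀ _ : ℕ, SL) := by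
  set u : ℕ → (ℕ → SL) := fun i j => if j = i then SL.e else SL.one with hu
  apply not_EN_of_seq
    (E := fun i => (MTerm.mul (.var 0) (.const (u i)), .var 0))
    (w := fun i _ k => if k = i then SL.one else SL.e)
  · intro i j h
    have h1 := congrArg Prod.fst h
    simp only at h1
    injection h1 with _ h2
    injection h2 with h3
    by_contra hne
    have := congrFun h3 i
    simp [hu, hne] at this
  · intro i j
    simp only [MTerm.eval]
    constructor
    · intro heq
      rintro rfl
      have := congrFun heq j
      simp [hu] at this
    · intro hne
      funext k
      by_cases hk : k = j
      · subst hk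
        have hki : k ≠ i := fun h => hne (h ▸ rfl)
        simp only [hu, Pi.mul_apply, if_pos rfl, if_neg hki]
        rfl
      · simp only [hu, Pi.mul_apply, if_neg hk]
        split <;> rfl

lemma noncomm_pow_not_EN {M : Type} [Monoid M] (a b : M) (hab : a * b ≠ b * a) :
    ¬ EquationallyNoetherian (∀ _ : ℕ, M) := by
  set δ : ℕ → M → (ℕ → M) := fun i m k => if k = i then m else 1 with hδ
  have hb1 : b ≠ 1 := fun h => hab (by rw [h, one_mul, mul_one])
  apply not_EN_of_seq
    (E := fun i => (MTerm.mul (.var 0) (.const (δ i b)), MTerm.mul (.const (δ i b)) (.var 0)))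
    (w := fun i _ => δ i a)
  · intro i j h
    have h1 := congrArg Prod.fst h
    simp only at h1
    injection h1 with _ h2
    injection h2 with h3
    by_contra hne
    have := congrFun h3 i
    simp [hδ, hne] at this
    exact hb1 this
  · intro i j
    simp only [MTerm.eval]
    constructor
    · intro heq
      rintro rfl
      have := congrFun heq j
      simp [hδ] at this
      exact hab this
    · intro hne
      funext k
      by_cases hki : k = i <;> by_cases hkj : k = j
      · exact absurd (hkj ▸ hki : j = i).symm (Ne.symm hne)
      · simp [hδ, hki, hkj, hne.symm]
      · simp [hδ, hki, hkj, hne]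
      · simp [hδ, hki, hkj]

def MTerm.coeffs {M : Type} {k : ℕ} : MTerm M k → Fin k → ℕ
  | .var i => fun j => if j = i then 1 else 0
  | .const _ => fun _ => 0
  | .one => fun _ => 0
  | .mul t s => fun j => t.coeffs j + s.coeffs j

def MTerm.cpart {M : Type} [Monoid M] {k : ℕ} : MTerm M k → M
  | .var _ => 1
  | .const m => m
  | .one => 1
  | .mul t s => t.cpart * s.cpart

lemma eval_decomp {M : Type} [CommMonoid M] {k : ℕ} (t : MTerm M k) (v : Fin k → M) :
    t.eval v = t.cpart * ∏ i, v i ^ t.coeffs i := by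
  induction t with
  | var i => simp [MTerm.eval, MTerm.coeffs, MTerm.cpart, pow_ite]
  | const m => simp [MTerm.eval, MTerm.coeffs, MTerm.cpart]
  | one => simp [MTerm.eval, MTerm.coeffs, MTerm.cpart]
  | mul t s iht ihs =>
      simp only [MTerm.eval, MTerm.coeffs, MTerm.cpart, iht, ihs]
      rw [mul_mul_mul_comm, ← Finset.prod_mul_distrib]
      simp [pow_add]

section ZP
variable {M : Type} [CommGroup M] {n : ℕ} [NeZero n]

def zpw (n : ℕ) [NeZero n] {M : Type} [Monoid M] (x : M) (z : ZMod n) : M := x ^ z.val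

lemma pow_mod_n (hexp : ∀ x : M, x ^ n = 1) (x : M) (a : ℕ) : x ^ (a % n) = x ^ a := by
  conv_rhs => rw [← Nat.div_add_mod a n]
  rw [pow_add, pow_mul, hexp, one_pow, one_mul]

lemma zpw_add (hexp : ∀ x : M, x ^ n = 1) (x : M) (z w : ZMod n) :
    zpw n x (z + w) = zpw n x z * zpw n x w := by
  unfold zpw
  rw [ZMod.val_add, pow_mod_n hexp, pow_add]

lemma zpw_natCast (hexp : ∀ x : M, x ^ n = 1) (x : M) (a : ℕ) :
    zpw n x (a : ZMod n) = x ^ a := by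
  unfold zpw
  rw [ZMod.val_natCast, pow_mod_n hexp]

def eqcoef (n : ℕ) [NeZero n] {M : Type} {k : ℕ} (e : MTerm M k × MTerm M k) :
    Fin k → ZMod n :=
  fun i => (e.1.coeffs i : ZMod n) - (e.2.coeffs i : ZMod n)

def eqconst {M : Type} [Group M] {k : ℕ} (e : MTerm M k × MTerm M k) : M :=
  (e.1.cpart)⁻¹ * e.2.cpart

lemma sol_iff (hexp : ∀ x : M, x ^ n = 1) {k : ℕ} (e : MTerm M k × MTerm M k)
    (v : Fin k → M) :
    (e.1.eval v = e.2.eval v) ↔ (∏ i, zpw n (v i) (eqcoef n e i)) = eqconst e := by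
  rw [eval_decomp, eval_decomp]
  have hfac : ∀ i, zpw n (v i) (eqcoef n e i)
      = v i ^ e.1.coeffs i * (v i ^ e.2.coeffs i)⁻¹ := by
    intro i
    have h : zpw n (v i) (eqcoef n e i) * zpw n (v i) (e.2.coeffs i : ZMod n)
        = zpw n (v i) (e.1.coeffs i : ZMod n) := by
      rw [← zpw_add hexp, eqcoef, sub_add_cancel]
    rw [zpw_natCast hexp, zpw_natCast hexp] at h
    exact eq_mul_inv_of_mul_eq h
  rw [Finset.prod_congr rfl (fun i _ => hfac i), Finset.prod_mul_distrib,
    Finset.prod_inv_distrib, eqconst]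
  constructor
  · intro h
    rw [eq_inv_mul_iff_mul_eq, ← mul_assoc, mul_inv_eq_iff_eq_mul]
    exact h
  · intro h
    rw [eq_inv_mul_iff_mul_eq, ← mul_assoc, mul_inv_eq_iff_eq_mul] at h
    exact h

end ZP

theorem EN_of_commGroup (M : Type) [CommGroup M] (n : ℕ) (hn : 0 < n)
    (hexp : ∀ x : M, x ^ n = 1) : EquationallyNoetherian M := by
  haveI : NeZero n := ⟨hn.ne'⟩
  intro k S
  by_cases hcase : ∃ e ∈ S, ∃ e' ∈ S, eqcoef n e = eqcoef n e' ∧ eqconst e ≠ eqconst e'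
  · obtain ⟨e, he, e', he', hd, hc⟩ := hcase
    refine ⟨{e, e'}, ?_, (Set.finite_singleton e').insert e, ?_⟩
    · rintro x (rfl | rfl)
      · exact he
      · exact he'
    · have hempty : SolSet ({e, e'} : Set (MTerm M k × MTerm M k)) = ∅ := by
        ext v
        simp only [Set.mem_empty_iff_false, iff_false]
        intro hv
        have h1 := (sol_iff hexp e v).mp (hv e (by simp))
        have h2 := (sol_iff hexp e' v).mp (hv e' (by simp))
        exact hc (by rw [← h1, ← h2, hd])
      rw [hempty]
      symm
      rw [Set.eq_empty_iff_forall_notMem]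
      intro v hv
      have : v ∈ SolSet ({e, e'} : Set (MTerm M k × MTerm M k)) := by
        intro x hx
        rcases hx with h | h
        · subst h; exact hv _ he
        · subst h; exact hv _ he'
      rw [hempty] at this
      exact this
  · push_neg at hcase
    have hrep : ∀ t : ((fun e => eqcoef n e) '' S),
        ∃ e, e ∈ S ∧ eqcoef n e = (t : Fin k → ZMod n) := by
      rintro ⟨t, e, heS, rfl⟩
      exact ⟨e, heS, rfl⟩
    choose rep hrepS hrepc using hrep
    haveI : Finite ((fun e => eqcoef n e) '' S : Set (Fin k → ZMod n)) :=
      (Set.toFinite _).to_subtype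
    refine ⟨Set.range rep, ?_, Set.finite_range rep, ?_⟩
    · rintro x ⟨t, rfl⟩
      exact hrepS t
    · refine Set.Subset.antisymm ?_ (SolSet_antitone (by rintro x ⟨t, rfl⟩; exact hrepS t))
      intro v hv e he
      have ht : eqcoef n e ∈ ((fun e => eqcoef n e) '' S) := ⟨e, he, rfl⟩
      have h0 := hv (rep ⟨_, ht⟩) ⟨⟨_, ht⟩, rfl⟩
      rw [sol_iff hexp] at h0 ⊢
      have hcc : eqconst (rep ⟨_, ht⟩) = eqconst e :=
        hcase _ (hrepS ⟨_, ht⟩) e he (by rw [hrepc])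
      rw [hrepc ⟨_, ht⟩] at h0
      rw [← hcc]
      exact h0

/-- For a variety `V` of monoids (a class closed under submonoids, homomorphic images
and arbitrary direct products), every monoid in `V` is equationally Noetherian (with
constants) iff `V` is a variety of abelian groups of exponent dividing some fixed `n`,
i.e. `V` satisfies the identities `xy = yx` and `x^n = 1` for some `n ≥ 1`. -/
theorem monoid_variety_noetherian_iff_abelian_group_of_finite_exponent
    (V : (M : Type) → Monoid M → Prop)
    (hsub : ∀ (M : Type) [iM : Monoid M], V M iM → ∀ N : Submonoid M, V N inferInstance)
    (hquot : ∀ (M N : Type) [iM : Monoid M] [iN : Monoid N] (f : M →* N),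
      Function.Surjective f → V M iM → V N iN)
    (hprod : ∀ (ι : Type) (M : ι → Type) [iM : ∀ i, Monoid (M i)],
      (∀ i, V (M i) (iM i)) → V (∀ i, M i) inferInstance) :
    (∀ (M : Type) [iM : Monoid M], V M iM → EquationallyNoetherian M) ↔
    (∃ n : ℕ, 0 < n ∧ ∀ (M : Type) [iM : Monoid M], V M iM →
      (∀ x y : M, x * y = y * x) ∧ ∀ x : M, x ^ n = 1) := by
  constructor
  · intro H
    have hcomm : ∀ (M : Type) (iM : Monoid M), V M iM → ∀ x y : M, x * y = y * x := by
      intro M iM hVM x y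
      by_contra hxy
      have hVP : V (∀ _ : ℕ, M) inferInstance := hprod ℕ (fun _ => M) (fun _ => hVM)
      exact noncomm_pow_not_EN x y hxy (H _ hVP)
    have hexp : ∃ n : ℕ, 0 < n ∧
        ∀ (M : Type) (iM : Monoid M), V M iM → ∀ x : M, x ^ n = 1 := by
      by_contra hno
      push_neg at hno
      have h' : ∀ m : ℕ, ∃ (M : Type) (iM : Monoid M), V M iM ∧ ∃ x : M, x ^ (m + 1) ≠ 1 :=
        fun m => by
          obtain ⟨M, iM, hVM, x, hx⟩ := hno (m + 1) (Nat.succ_pos m)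
          exact ⟨M, iM, hVM, x, hx⟩
      choose Mf iMf hVf xf hxf using h'
      letI : ∀ m, Monoid (Mf m) := iMf
      have hVN : V (∀ m, Mf m) inferInstance := hprod ℕ Mf hVf
      set y : ∀ m, Mf m := xf with hy_def
      have hy : ∀ kk : ℕ, 0 < kk → y ^ kk ≠ 1 := by
        intro kk hk h1
        have h2 := congrFun h1 (kk - 1)
        rw [Pi.pow_apply] at h2
        exact hxf (kk - 1) (by rwa [Nat.sub_add_cancel hk])
      have hVPow : V (Submonoid.powers y) inferInstance := hsub _ hVN _
      classical
      have hclose : ∀ p q : (∀ m, Mf m), p ∈ Submonoid.powers y → q ∈ Submonoid.powers y →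
          p ≠ 1 → q ≠ 1 → p * q ≠ 1 := by
        rintro _ _ ⟨kp, rfl⟩ ⟨kq, rfl⟩ hp hq
        show y ^ kp * y ^ kq ≠ 1
        have hkp : 0 < kp := Nat.pos_of_ne_zero (fun h => hp (by simp [h]))
        rw [← pow_add]
        exact hy _ (by omega)
      let f : (Submonoid.powers y) →* SL :=
        { toFun := fun p => if (p : ∀ m, Mf m) = 1 then SL.one else SL.e
          map_one' := if_pos rfl
          map_mul' := fun p q => by
            by_cases hp : (p : ∀ m, Mf m) = 1 <;> by_cases hq : (q : ∀ m, Mf m) = 1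
            · have h1 : ((p * q : Submonoid.powers y) : ∀ m, Mf m) = 1 := by
                rw [Submonoid.coe_mul, hp, hq, one_mul]
              rw [if_pos h1, if_pos hp, if_pos hq]
              rfl
            · have h1 : ((p * q : Submonoid.powers y) : ∀ m, Mf m) ≠ 1 := by
                rw [Submonoid.coe_mul, hp, one_mul]; exact hq
              rw [if_neg h1, if_pos hp, if_neg hq]
              rfl
            · have h1 : ((p * q : Submonoid.powers y) : ∀ m, Mf m) ≠ 1 := by
                rw [Submonoid.coe_mul, hq, mul_one]; exact hp
              rw [if_neg h1, if_neg hp, if_pos hq]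
              rfl
            · have h1 : ((p * q : Submonoid.powers y) : ∀ m, Mf m) ≠ 1 := by
                rw [Submonoid.coe_mul]
                exact hclose _ _ p.2 q.2 hp hq
              rw [if_neg h1, if_neg hp, if_neg hq]
              rfl }
      have fsurj : Function.Surjective f := by
        intro s
        cases s with
        | one => exact ⟨1, if_pos rfl⟩
        | e =>
            refine ⟨⟨y, Submonoid.mem_powers y⟩, ?_⟩
            exact if_neg (by simpa using hy 1 one_pos)
      have hVSL : V SL inferInstance := hquot _ SL f fsurj hVPow
      have hVSLpow : V (∀ _ : ℕ, SL) inferInstance := hprod ℕ (fun _ => SL) (fun _ => hVSL)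
      exact SLpow_not_EN (H _ hVSLpow)
    obtain ⟨n, hn, hexpn⟩ := hexp
    refine ⟨n, hn, ?_⟩
    intro M iM hVM
    exact ⟨hcomm M iM hVM, hexpn M iM hVM⟩
  · rintro ⟨n, hn, hids⟩ M iM hVM
    obtain ⟨hc, he⟩ := hids M hVM
    letI : CommGroup M :=
      { iM with
        mul_comm := hc
        inv := fun x => x ^ (n - 1)
        inv_mul_cancel := fun x => by
          show x ^ (n - 1) * x = 1
          rw [← pow_succ, Nat.sub_add_cancel hn]
          exact he x }
    exact EN_of_commGroup M n hn he
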